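/- Let ẋ = P(x,y), ẏ = Q(x,y) be a cubic polynomial differential system with real coefficients, with degree-3 homogeneous components p₃ of P and q₃ of Q, and set C₃(x,y) = y·p₃(x,y) − x·q₃(x,y). If u,v,w ∈ ℂ with (u,v) ≠ (0,0) and the polynomial ux+vy+w divides u·P+v·Q in ℂ[x,y] (i.e. ux+vy+w = 0 is an invariant straight line of the system), then C₃(−v,u) = 0. -/

import Mathlib

open MvPolynomial

lemma finsupp_sum_fin_two (d : Fin 2 →₀ ℕ) : (d.sum fun _ e => e) = d 0 + d 1 := by
  rw [Finsupp.sum, Finset.sum_subset (Finset.subset_univ d.support)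
    (fun i _ hi => Finsupp.notMem_support_iff.mp hi)]
  exact Fin.sum_univ_two d

lemma finsupp_degree_fin_two (d : Fin 2 →₀ ℕ) : d.degree = d 0 + d 1 := by
  rw [Finsupp.degree_apply, Finset.sum_subset (Finset.subset_univ d.support)
    (fun i _ hi => Finsupp.notMem_support_iff.mp hi)]
  exact Fin.sum_univ_two d

lemma prod_support_pow_fin_two {M : Type*} [CommMonoid M] (g : Fin 2 → M) (m : Fin 2 →₀ ℕ) :
    ∏ i ∈ m.support, g i ^ m i = g 0 ^ m 0 * g 1 ^ m 1 := by
  rw [Finset.prod_subset (Finset.subset_univ m.support)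
    (fun i _ hi => by rw [Finsupp.notMem_support_iff.mp hi, pow_zero])]
  exact Fin.prod_univ_two _

lemma natDegree_linear_pow_le (a b : ℂ) (i : ℕ) :
    ((Polynomial.C a * Polynomial.X + Polynomial.C b) ^ i).natDegree ≤ i := by
  refine Polynomial.natDegree_pow_le.trans ?_
  have := Nat.mul_le_mul_left i (Polynomial.natDegree_linear_le (a := a) (b := b))
  simpa using this

lemma coeff_linear_pow (a b : ℂ) (i : ℕ) :
    ((Polynomial.C a * Polynomial.X + Polynomial.C b) ^ i).coeff i = a ^ i := by
  have h := Polynomial.coeff_pow_of_natDegree_le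
    (p := Polynomial.C a * Polynomial.X + Polynomial.C b) (n := 1) (m := i)
    (Polynomial.natDegree_linear_le (a := a) (b := b))
  simpa using h

lemma coeff_linear_pow_mul (a b c d : ℂ) (i j : ℕ) :
    (((Polynomial.C a * Polynomial.X + Polynomial.C b) ^ i) *
      ((Polynomial.C c * Polynomial.X + Polynomial.C d) ^ j)).coeff (i + j)
      = a ^ i * c ^ j := by
  rw [Polynomial.coeff_mul_add_eq_of_natDegree_le (natDegree_linear_pow_le a b i)
    (natDegree_linear_pow_le c d j), coeff_linear_pow, coeff_linear_pow]

lemma natDegree_linear_pow_mul_le (a b c d : ℂ) (i j : ℕ) :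
    (((Polynomial.C a * Polynomial.X + Polynomial.C b) ^ i) *
      ((Polynomial.C c * Polynomial.X + Polynomial.C d) ^ j)).natDegree ≤ i + j :=
  Polynomial.natDegree_mul_le.trans
    (add_le_add (natDegree_linear_pow_le a b i) (natDegree_linear_pow_le c d j))

/-- Key lemma: the degree-`k` coefficient of the composition of `F` with an
affine line `t ↦ (a t + b, c t + d)` equals the evaluation at the direction
`(a,c)` of the degree `k` homogeneous component, provided `F.totalDegree ≤ k`. -/
lemma coeff_aeval_line (F : MvPolynomial (Fin 2) ℂ) (k : ℕ) (hF : F.totalDegree ≤ k)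
    (a b c d : ℂ) :
    (aeval ![Polynomial.C a * Polynomial.X + Polynomial.C b,
      Polynomial.C c * Polynomial.X + Polynomial.C d] F).coeff k
      = eval ![a, c] (homogeneousComponent k F) := by
  have hsupp : (homogeneousComponent k F).support ⊆ F.support := by
    intro m hm
    rw [mem_support_iff, coeff_homogeneousComponent] at hm
    rw [mem_support_iff]
    intro h
    apply hm
    split <;> simp [h]
  have hL : (aeval ![Polynomial.C a * Polynomial.X + Polynomial.C b,
      Polynomial.C c * Polynomial.X + Polynomial.C d] F).coeff k
      = ∑ m ∈ F.support, coeff m F *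
        (((Polynomial.C a * Polynomial.X + Polynomial.C b) ^ m 0) *
          ((Polynomial.C c * Polynomial.X + Polynomial.C d) ^ m 1)).coeff k := by
    rw [aeval_def, eval₂_eq, Polynomial.finset_sum_coeff]
    refine Finset.sum_congr rfl fun m _ => ?_
    rw [prod_support_pow_fin_two]
    simp [Polynomial.coeff_C_mul, Polynomial.algebraMap_eq]
  have hR : eval ![a, c] (homogeneousComponent k F)
      = ∑ m ∈ F.support, (if m 0 + m 1 = k then coeff m F else 0)
        * (a ^ m 0 * c ^ m 1) := by
    rw [eval_eq, Finset.sum_subset hsupp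
      (fun m _ hm => by rw [notMem_support_iff] at hm; simp [hm])]
    refine Finset.sum_congr rfl fun m _ => ?_
    rw [coeff_homogeneousComponent, prod_support_pow_fin_two, finsupp_degree_fin_two]
    simp
  rw [hL, hR]
  refine Finset.sum_congr rfl fun m hm => ?_
  have hdeg : m 0 + m 1 ≤ k := by
    rw [← finsupp_sum_fin_two]
    exact le_trans (le_totalDegree hm) hF
  rcases eq_or_lt_of_le hdeg with h | h
  · rw [← h, coeff_linear_pow_mul, if_pos rfl]
  · rw [Polynomial.coeff_eq_zero_of_natDegree_lt
      (lt_of_le_of_lt (natDegree_linear_pow_mul_le a b c d (m 0) (m 1)) h),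
      if_neg (by omega)]
    simp

lemma totalDegree_map_le' (p : MvPolynomial (Fin 2) ℝ) :
    (map (algebraMap ℝ ℂ) p).totalDegree ≤ p.totalDegree :=
  Finset.sup_mono (support_map_subset _ _)

/-- If `ux+vy+w = 0` (with `u,v,w ∈ ℂ`, `(u,v) ≠ (0,0)`) is an
invariant straight line of the cubic system ẋ = P, ẏ = Q (i.e. `ux+vy+w`
divides `u·P+v·Q` in `ℂ[x,y]`), then `C₃(−v,u) = 0`, where
`C₃ = y·p₃ − x·q₃` and `p₃, q₃` are the degree-3 homogeneous components. -/
theorem C3_vanishes_at_invariant_line_direction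
    (P Q : MvPolynomial (Fin 2) ℝ)
    (hcubic : max P.totalDegree Q.totalDegree = 3)
    (u v w : ℂ) (huv : (u, v) ≠ (0, 0))
    (hdvd : (C u * X 0 + C v * X 1 + C w) ∣
      (C u * map (algebraMap ℝ ℂ) P + C v * map (algebraMap ℝ ℂ) Q)) :
    aeval ![-v, u]
      (X 1 * homogeneousComponent 3 P - X 0 * homogeneousComponent 3 Q) = 0 := by
  -- choose a point (x₀, y₀) on the line
  have huv' : u ≠ 0 ∨ v ≠ 0 := by
    by_contra h
    push_neg at h
    exact huv (by simp [h.1, h.2, Prod.ext_iff])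
  obtain ⟨x₀, y₀, h₀⟩ : ∃ x₀ y₀ : ℂ, u * x₀ + v * y₀ + w = 0 := by
    rcases huv' with hu | hv
    · exact ⟨-w / u, 0, by field_simp; ring⟩
    · exact ⟨0, -w / v, by field_simp; ring⟩
  set F : MvPolynomial (Fin 2) ℂ :=
    C u * map (algebraMap ℝ ℂ) P + C v * map (algebraMap ℝ ℂ) Q with hFdef
  -- F has total degree ≤ 3
  have hFdeg : F.totalDegree ≤ 3 := by
    refine (totalDegree_add _ _).trans (max_le ?_ ?_) <;>
    · refine (totalDegree_mul _ _).trans ?_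
      rw [totalDegree_C, zero_add]
      refine (totalDegree_map_le' _).trans ?_
      · first
        | exact le_trans (le_max_left _ _) hcubic.le
        | exact le_trans (le_max_right _ _) hcubic.le
  -- composition with the affine line
  set φ : MvPolynomial (Fin 2) ℂ →ₐ[ℂ] Polynomial ℂ :=
    aeval ![Polynomial.C (-v) * Polynomial.X + Polynomial.C x₀,
      Polynomial.C u * Polynomial.X + Polynomial.C y₀] with hφdef
  have hφL : φ (C u * X 0 + C v * X 1 + C w) = 0 := by
    rw [hφdef]
    simp only [map_add, map_mul, aeval_X, aeval_C, Matrix.cons_val_zero,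
      Matrix.cons_val_one, Matrix.head_cons, Polynomial.algebraMap_eq, map_neg]
    have h₀' : Polynomial.C u * Polynomial.C x₀ + Polynomial.C v * Polynomial.C y₀
        + Polynomial.C w = 0 := by
      rw [← Polynomial.C_mul, ← Polynomial.C_mul, ← Polynomial.C_add, ← Polynomial.C_add,
        h₀, Polynomial.C_0]
    linear_combination h₀'
  have hφF : φ F = 0 := by
    obtain ⟨G, hG⟩ := hdvd
    rw [hG, map_mul, hφL, zero_mul]
  -- the coefficient of t³ in φ F is the evaluation of the cubic part of F
  have hkey : eval ![-v, u] (homogeneousComponent 3 F) = 0 := by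
    rw [← coeff_aeval_line F 3 hFdeg (-v) x₀ u y₀]
    rw [show (aeval ![Polynomial.C (-v) * Polynomial.X + Polynomial.C x₀,
      Polynomial.C u * Polynomial.X + Polynomial.C y₀] F) = φ F from rfl, hφF]
    simp
  -- homogeneous component of F in terms of those of P and Q
  have hhc : homogeneousComponent 3 F
      = C u * map (algebraMap ℝ ℂ) (homogeneousComponent 3 P)
        + C v * map (algebraMap ℝ ℂ) (homogeneousComponent 3 Q) := by
    ext m
    simp only [coeff_homogeneousComponent, hFdef, coeff_add, coeff_C_mul, coeff_map]
    split <;> simp [coeff_homogeneousComponent, *]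
  rw [hhc] at hkey
  simp only [eval_add, eval_mul, eval_C] at hkey
  have hPe : eval ![-v, u] (map (algebraMap ℝ ℂ) (homogeneousComponent 3 P))
      = aeval ![-v, u] (homogeneousComponent 3 P) := by
    rw [eval_map, aeval_def]
  have hQe : eval ![-v, u] (map (algebraMap ℝ ℂ) (homogeneousComponent 3 Q))
      = aeval ![-v, u] (homogeneousComponent 3 Q) := by
    rw [eval_map, aeval_def]
  rw [hPe, hQe] at hkey
  simp only [map_sub, map_mul, aeval_X, Matrix.cons_val_zero, Matrix.cons_val_one,
    Matrix.head_cons]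
  linear_combination hkey
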